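/- Let K be a field, A = K[x₁,…,xₙ], Φ an automorphism of the monoid End A of K-algebra endomorphisms of A, and e_{ij} the Kronecker endomorphisms of A in the standard base. Then the following are equivalent: (i) Φ is quasi-inner, i.e., there exists a bijection s : A → A such that Φ(ν) = s ∘ ν ∘ s⁻¹ (as maps of sets) for every ν ∈ End A; (ii) there exist u₁,…,uₙ ∈ A forming a base of A such that, letting B denote the K-algebra automorphism of A with B(x_i) = u_i, one has Φ(e_{ij}) = B ∘ e_{ij} ∘ B⁻¹ for all i, j (equivalently, Φ(e_{ij})(u_k) = u_i if k = j and 0 if k ≠ j, i.e., the Φ(e_{ij}) are the Kronecker endomorphisms in the base u₁,…,uₙ). -/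

import Mathlib

open MvPolynomial

/-- The Kronecker endomorphism `e_{ij}` of `K[x₁,…,xₙ]` in the standard base:
`x_j ↦ x_i` and `x_k ↦ 0` for `k ≠ j`. -/
noncomputable def kron (K : Type) [Field K] (n : ℕ) (i j : Fin n) :
    MvPolynomial (Fin n) K →ₐ[K] MvPolynomial (Fin n) K :=
  MvPolynomial.aeval fun k : Fin n =>
    if k = j then MvPolynomial.X i else (0 : MvPolynomial (Fin n) K)

namespace Stmt15Aux


private lemma surj_inj {K : Type} [Field K] {n : ℕ}
    (B : MvPolynomial (Fin n) K →ₐ[K] MvPolynomial (Fin n) K)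
    (hB : Function.Surjective ⇑B) : Function.Injective ⇑B := by
  set A := MvPolynomial (Fin n) K
  have hpow : ∀ i : ℕ, Function.Surjective ⇑(B ^ i) := by
    intro i
    induction i with
    | zero => exact fun p => ⟨p, by rw [pow_zero, AlgHom.one_apply]⟩
    | succ m ih =>
      intro p
      obtain ⟨q, hq⟩ := hB p
      obtain ⟨r, hr⟩ := ih q
      exact ⟨r, by rw [pow_succ', AlgHom.mul_apply, hr, hq]⟩
  have hmono : Monotone fun i : ℕ => RingHom.ker ((B ^ i : _) : A →+* A) := by
    apply monotone_nat_of_le_succ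
    intro i x hx
    rw [RingHom.mem_ker] at hx ⊢
    show (B ^ (i+1)) x = 0
    rw [pow_succ', AlgHom.mul_apply]
    rw [show (B ^ i) x = 0 from hx, map_zero]
  obtain ⟨m, hm⟩ := (monotone_stabilizes_iff_noetherian.mpr inferInstance)
    ⟨fun i : ℕ => RingHom.ker ((B ^ i : _) : A →+* A), hmono⟩
  rw [injective_iff_map_eq_zero]
  intro x hx
  obtain ⟨y, hy⟩ := hpow m x
  have h1 : (B ^ (m+1)) y = 0 := by
    rw [pow_succ', AlgHom.mul_apply, hy, hx]
  have h2 : y ∈ RingHom.ker ((B ^ m : _) : A →+* A) := by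
    have := hm (m+1) (Nat.le_succ m)
    simp only [OrderHom.coe_mk] at this
    rw [this, RingHom.mem_ker]
    exact h1
  rw [RingHom.mem_ker] at h2
  rw [← hy]
  exact h2

section Main
variable {K : Type} [Field K] {n : ℕ}
  (Φ : (MvPolynomial (Fin n) K →ₐ[K] MvPolynomial (Fin n) K) ≃*
       (MvPolynomial (Fin n) K →ₐ[K] MvPolynomial (Fin n) K))

variable {K : Type} [Field K] {n : ℕ}
  (Φ : (MvPolynomial (Fin n) K →ₐ[K] MvPolynomial (Fin n) K) ≃*
       (MvPolynomial (Fin n) K →ₐ[K] MvPolynomial (Fin n) K))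

/-- the "constant family" endomorphism sending every variable to `p` -/
noncomputable abbrev cc (p : MvPolynomial (Fin n) K) :
    MvPolynomial (Fin n) K →ₐ[K] MvPolynomial (Fin n) K :=
  aeval fun _ => p

lemma cc_X (p : MvPolynomial (Fin n) K) (k : Fin n) : cc p (X k) = p := aeval_X _ _

lemma kron_X (i j k : Fin n) :
    kron K n i j (X k) = if k = j then X i else 0 := by
  simp [kron]

lemma fwd (s : MvPolynomial (Fin n) K ≃ MvPolynomial (Fin n) K)
    (hs : ∀ (ν : MvPolynomial (Fin n) K →ₐ[K] MvPolynomial (Fin n) K)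
          (p : MvPolynomial (Fin n) K), Φ ν p = s (ν (s.symm p)))
    (hpos : 0 < n) :
    (∃ u : Fin n → MvPolynomial (Fin n) K,
        Function.Bijective ⇑(MvPolynomial.aeval (R := K) u) ∧
        ∀ i j k : Fin n, Φ (kron K n i j) (u k) = if k = j then u i else 0) := by
  -- Φ.symm is implemented by s.symm
  have hs' : ∀ (ν : MvPolynomial (Fin n) K →ₐ[K] MvPolynomial (Fin n) K) (p : MvPolynomial (Fin n) K), Φ.symm ν p = s.symm (ν (s p)) := by
    intro ν p
    have h := hs (Φ.symm ν) (s p)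
    rw [Φ.apply_symm_apply, Equiv.symm_apply_apply] at h
    rw [h, Equiv.symm_apply_apply]
  -- the element W := s.symm 0 is fixed by every endomorphism
  set W : MvPolynomial (Fin n) K := s.symm 0 with hWdef
  have hW : ∀ μ : MvPolynomial (Fin n) K →ₐ[K] MvPolynomial (Fin n) K, μ W = W := by
    intro μ
    have h := hs μ 0
    rw [map_zero] at h
    have : s (μ W) = 0 := h.symm
    calc μ W = s.symm (s (μ W)) := (Equiv.symm_apply_apply _ _).symm
    _ = s.symm 0 := by rw [this]
  -- the base
  set u : Fin n → MvPolynomial (Fin n) K := fun k => s (X k + W) with hu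
  set B : MvPolynomial (Fin n) K →ₐ[K] MvPolynomial (Fin n) K := aeval u with hBdef
  have hBX : ∀ k, B (X k) = u k := fun k => aeval_X _ _
  have hsymm_u : ∀ k, s.symm (u k) = X k + W := fun k => Equiv.symm_apply_apply _ _
  -- property (A): the Φ-images of the Kroneckers are Kroneckers in base u
  have hA1 : ∀ i j k : Fin n, Φ (kron K n i j) (u k) = if k = j then u i else 0 := by
    intro i j k
    rw [hs, hsymm_u, map_add, hW (kron K n i j), kron_X]
    by_cases h : k = j
    · simp [h, hu]
    · simp [h, hWdef]
  have hsurj : Function.Surjective ⇑B := by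
    set i0 : Fin n := ⟨0, hpos⟩ with hi0
    set y' : MvPolynomial (Fin n) K := s.symm (X i0) - W with hy'
    set v' : Fin n → MvPolynomial (Fin n) K := fun k => cc (X k) (s y') with hv'
    set B' : MvPolynomial (Fin n) K →ₐ[K] MvPolynomial (Fin n) K := aeval (fun k => s.symm (v' k)) with hB'
    -- B ∘ cc (X k) = cc (u k)
    have hBc : ∀ k : Fin n, B.comp (cc (X k)) = cc (u k) := by
      intro k
      apply algHom_ext
      intro m
      rw [AlgHom.comp_apply, cc_X, hBX, cc_X]
    have hH : Φ.symm B * B' = 1 := by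
      apply algHom_ext
      intro k
      rw [AlgHom.mul_apply, AlgHom.one_apply]
      have h1 : B' (X k) = s.symm (v' k) := aeval_X _ _
      rw [h1, hs', Equiv.apply_symm_apply]
      have h2 : B (v' k) = cc (u k) (s y') := by
        rw [hv']
        rw [← AlgHom.comp_apply, hBc]
      rw [h2, ← hs' (cc (u k)) y', hy', map_sub, hW (Φ.symm (cc (u k)))]
      rw [hs', Equiv.apply_symm_apply, cc_X, hsymm_u]
      ring
    have hfin : B * Φ B' = 1 := by
      have := congrArg Φ hH
      rw [map_mul, Φ.apply_symm_apply, map_one] at this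
      exact this
    intro p
    refine ⟨Φ B' p, ?_⟩
    have := congrArg (fun φ : MvPolynomial (Fin n) K →ₐ[K] MvPolynomial (Fin n) K => φ p) hfin
    simpa using this
  exact ⟨u, ⟨surj_inj B hsurj, hsurj⟩, hA1⟩

variable {K : Type} [Field K] {n : ℕ}
  (Φ : (MvPolynomial (Fin n) K →ₐ[K] MvPolynomial (Fin n) K) ≃*
       (MvPolynomial (Fin n) K →ₐ[K] MvPolynomial (Fin n) K))

lemma bwd (u : Fin n → MvPolynomial (Fin n) K)
    (hBij : Function.Bijective ⇑(MvPolynomial.aeval (R := K) u))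
    (hu : ∀ i j k : Fin n, Φ (kron K n i j) (u k) = if k = j then u i else 0)
    (hpos : 0 < n) :
    ∃ s : MvPolynomial (Fin n) K ≃ MvPolynomial (Fin n) K,
        ∀ (ν : MvPolynomial (Fin n) K →ₐ[K] MvPolynomial (Fin n) K)
          (p : MvPolynomial (Fin n) K), Φ ν p = s (ν (s.symm p)) := by
  set i0 : Fin n := ⟨0, hpos⟩ with hi0
  set E : MvPolynomial (Fin n) K ≃ₐ[K] MvPolynomial (Fin n) K :=
    AlgEquiv.ofBijective (MvPolynomial.aeval (R := K) u) hBij with hE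
  have hEX : ∀ k, E (X k) = u k := fun k => aeval_X _ _
  have hEinvu : ∀ k, E.symm (u k) = X k := by
    intro k; rw [← hEX k, AlgEquiv.symm_apply_apply]
  set Eh : MvPolynomial (Fin n) K →ₐ[K] MvPolynomial (Fin n) K := E.toAlgHom with hEh
  set Ei : MvPolynomial (Fin n) K →ₐ[K] MvPolynomial (Fin n) K := E.symm.toAlgHom with hEi
  have hEhap : ∀ p, Eh p = E p := fun _ => rfl
  have hEiap : ∀ p, Ei p = E.symm p := fun _ => rfl
  -- the conjugated automorphism
  set Ψ : (MvPolynomial (Fin n) K →ₐ[K] MvPolynomial (Fin n) K) →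
      (MvPolynomial (Fin n) K →ₐ[K] MvPolynomial (Fin n) K) :=
    fun ν => Ei * Φ ν * Eh with hΨ
  set Ψi : (MvPolynomial (Fin n) K →ₐ[K] MvPolynomial (Fin n) K) →
      (MvPolynomial (Fin n) K →ₐ[K] MvPolynomial (Fin n) K) :=
    fun ν => Φ.symm (Eh * ν * Ei) with hΨi
  have hΨap : ∀ ν p, Ψ ν p = E.symm (Φ ν (E p)) := fun _ _ => rfl
  have hΨiΨ : ∀ ν, Ψi (Ψ ν) = ν := by
    intro ν
    have : Eh * Ψ ν * Ei = Φ ν := by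
      apply AlgHom.ext; intro p
      simp only [AlgHom.mul_apply, hΨap, hEhap, hEiap,
        AlgEquiv.apply_symm_apply, AlgEquiv.symm_apply_apply]
    rw [hΨi]; simp only [this, Φ.symm_apply_apply]
  have hΨΨi : ∀ ν, Ψ (Ψi ν) = ν := by
    intro ν
    apply AlgHom.ext; intro p
    rw [hΨap, hΨi, Φ.apply_symm_apply, AlgHom.mul_apply, AlgHom.mul_apply,
      hEhap, hEiap, AlgEquiv.symm_apply_apply, AlgEquiv.symm_apply_apply]
  have hΨmul : ∀ μ ν, Ψ (μ * ν) = Ψ μ * Ψ ν := by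
    intro μ ν
    apply AlgHom.ext; intro p
    simp only [hΨap, AlgHom.mul_apply, map_mul, hEhap, hEiap,
      AlgEquiv.apply_symm_apply]
  have hΨimul : ∀ μ ν, Ψi (μ * ν) = Ψi μ * Ψi ν := by
    intro μ ν
    have := congrArg Ψi (hΨmul (Ψi μ) (Ψi ν))
    rw [hΨΨi μ, hΨΨi ν, hΨiΨ] at this
    exact this.symm
  have hΨk : ∀ i j, Ψ (kron K n i j) = kron K n i j := by
    intro i j
    apply algHom_ext; intro k
    rw [hΨap, hEX, hu, kron_X]
    by_cases h : k = j
    · simp [h, hEinvu]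
    · simp [h]
  have hΨik : ∀ i j, Ψi (kron K n i j) = kron K n i j := by
    intro i j
    conv_lhs => rw [← hΨk i j]
    exact hΨiΨ _
  -- (cc p) * kron k i0 = (cc p) * kron i0 i0
  have hLc4 : ∀ (p : MvPolynomial (Fin n) K) (k : Fin n),
      cc p * kron K n k i0 = cc p * kron K n i0 i0 := by
    intro p k
    apply algHom_ext; intro m
    rw [AlgHom.mul_apply, AlgHom.mul_apply, kron_X, kron_X]
    by_cases h : m = i0
    · simp [h, cc_X]
    · simp [h]
  -- any multiplicative kron-fixing image of cc p is a cc
  have hrange : ∀ (Θ : (MvPolynomial (Fin n) K →ₐ[K] MvPolynomial (Fin n) K) →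
        (MvPolynomial (Fin n) K →ₐ[K] MvPolynomial (Fin n) K)),
      (∀ μ ν, Θ (μ * ν) = Θ μ * Θ ν) →
      (∀ i j, Θ (kron K n i j) = kron K n i j) →
      ∀ p, Θ (cc p) = cc (Θ (cc p) (X i0)) := by
    intro Θ hmul hk p
    apply algHom_ext; intro m
    rw [cc_X]
    have h := congrArg Θ (hLc4 p m)
    rw [hmul, hmul, hk, hk] at h
    have h2 := congrArg (fun φ : MvPolynomial (Fin n) K →ₐ[K] MvPolynomial (Fin n) K
      => φ (X i0)) h
    simp only [AlgHom.mul_apply, kron_X, if_pos rfl] at h2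
    exact h2
  -- the bijection t
  set t : MvPolynomial (Fin n) K → MvPolynomial (Fin n) K :=
    fun p => Ψ (cc p) (X i0) with ht
  set t' : MvPolynomial (Fin n) K → MvPolynomial (Fin n) K :=
    fun p => Ψi (cc p) (X i0) with ht'
  have hcct : ∀ p, Ψ (cc p) = cc (t p) := fun p => hrange Ψ hΨmul hΨk p
  have hcct' : ∀ p, Ψi (cc p) = cc (t' p) := fun p => hrange Ψi hΨimul hΨik p
  have htt' : ∀ p, t (t' p) = p := by
    intro p
    have : cc (t (t' p)) = cc p := by
      rw [← hcct, ← hcct', hΨΨi]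
    have h2 := congrArg (fun φ : MvPolynomial (Fin n) K →ₐ[K] MvPolynomial (Fin n) K
      => φ (X i0)) this
    simpa only [cc_X] using h2
  have ht't : ∀ p, t' (t p) = p := by
    intro p
    have : cc (t' (t p)) = cc p := by
      rw [← hcct', ← hcct, hΨiΨ]
    have h2 := congrArg (fun φ : MvPolynomial (Fin n) K →ₐ[K] MvPolynomial (Fin n) K
      => φ (X i0)) this
    simpa only [cc_X] using h2
  -- main identity for Ψ
  have hmain : ∀ ν q, Ψ ν (t q) = t (ν q) := by
    intro ν q
    have h : Ψ ν * cc (t q) = cc (t (ν q)) := by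
      rw [← hcct, ← hΨmul]
      have : ν * cc q = cc (ν q) := by
        apply algHom_ext; intro m
        rw [AlgHom.mul_apply, cc_X, cc_X]
      rw [this, hcct]
    have h2 := congrArg (fun φ : MvPolynomial (Fin n) K →ₐ[K] MvPolynomial (Fin n) K
      => φ (X i0)) h
    simpa only [AlgHom.mul_apply, cc_X] using h2
  refine ⟨⟨fun p => E (t p), fun p => t' (E.symm p), ?_, ?_⟩, ?_⟩
  · intro p
    simp only [AlgEquiv.symm_apply_apply, ht't]
  · intro p
    simp only [htt', AlgEquiv.apply_symm_apply]
  · intro ν p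
    show Φ ν p = E (t (ν (t' (E.symm p))))
    have h1 : Φ ν p = E (Ψ ν (E.symm p)) := by
      rw [hΨap, AlgEquiv.apply_symm_apply, AlgEquiv.apply_symm_apply]
    rw [h1, ← htt' (E.symm p), hmain, ht't]
end Main

end Stmt15Aux

/-- An automorphism `Φ` of `End K[x₁,…,xₙ]` is quasi-inner if and only if the `Φ(e_{ij})`
are the Kronecker endomorphisms in some base `u₁,…,uₙ` of `K[x₁,…,xₙ]`. -/
theorem stmt_15 (K : Type) [Field K] (n : ℕ)
    (Φ : (MvPolynomial (Fin n) K →ₐ[K] MvPolynomial (Fin n) K) ≃*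
         (MvPolynomial (Fin n) K →ₐ[K] MvPolynomial (Fin n) K)) :
    (∃ s : MvPolynomial (Fin n) K ≃ MvPolynomial (Fin n) K,
        ∀ (ν : MvPolynomial (Fin n) K →ₐ[K] MvPolynomial (Fin n) K)
          (p : MvPolynomial (Fin n) K), Φ ν p = s (ν (s.symm p))) ↔
    (∃ u : Fin n → MvPolynomial (Fin n) K,
        Function.Bijective ⇑(MvPolynomial.aeval (R := K) u) ∧
        ∀ i j k : Fin n, Φ (kron K n i j) (u k) = if k = j then u i else 0) := by
  constructor
  · rintro ⟨s, hs⟩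
    rcases Nat.eq_zero_or_pos n with hn | hn
    · subst hn
      refine ⟨fun k => k.elim0, ?_, fun i j k => k.elim0⟩
      have h0 : (MvPolynomial.aeval (R := K) (fun k : Fin 0 => k.elim0 :
          Fin 0 → MvPolynomial (Fin 0) K)) = AlgHom.id K _ :=
        algHom_ext fun i => i.elim0
      rw [h0]
      simpa using Function.bijective_id
    · exact Stmt15Aux.fwd Φ s hs hn
  · rintro ⟨u, hBij, hu⟩
    rcases Nat.eq_zero_or_pos n with hn | hn
    · subst hn
      refine ⟨Equiv.refl _, fun ν p => ?_⟩
      have h0 : Φ ν = ν := algHom_ext fun i => i.elim0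
      simp [h0]
    · exact Stmt15Aux.bwd Φ u hBij hu hn
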